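/- arXiv:1805.07759 — 4 statements merged into one kernel-verified Lean document; each statement's English description precedes it below -/
import Mathlib

section
/- For every hyperhermitian quaternionic n×n matrix 𝓜 there exists a quaternionic unitary matrix 𝓔 ∈ U_ℍ(n) such that 𝓔*𝓜𝓔 is a diagonal matrix with real diagonal entries. -/
open scoped Quaternion
open Matrix Sum

noncomputable section

/-- The complex part `a` in the decomposition `q = a + b·j` of a quaternion. -/
def qa (q : ℍ[ℝ]) : ℂ := ⟨q.re, q.imI⟩

/-- The complex part `b` in the decomposition `q = a + b·j` of a quaternion. -/
def qb (q : ℍ[ℝ]) : ℂ := ⟨q.imJ, q.imK⟩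

/-- Entrywise complex conjugation of a complex matrix. -/
def conjM {m k : Type*} (M : Matrix m k ℂ) : Matrix m k ℂ := M.map (starRingEnd ℂ)

/-- The embedding τ : M_ℍ(p,m) → M_ℂ(2p,2m), τ(a + b·j) = [[a, −b],[conj b, conj a]]. -/
def tau {p m : ℕ} (M : Matrix (Fin p) (Fin m) ℍ[ℝ]) :
    Matrix (Fin p ⊕ Fin p) (Fin m ⊕ Fin m) ℂ :=
  Matrix.fromBlocks (M.map qa) (-(M.map qb)) (conjM (M.map qb)) (conjM (M.map qa))

/-- The standard symplectic matrix J = [[0, Iₙ],[−Iₙ, 0]]. -/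
def Jmat (n : ℕ) : Matrix (Fin n ⊕ Fin n) (Fin n ⊕ Fin n) ℂ :=
  Matrix.fromBlocks 0 1 (-1) 0

/-- index set {0,…,2n−1}, as two blocks. -/
abbrev Idx (n : ℕ) := Fin n ⊕ Fin n

/-- ℂ^{2n}. -/
abbrev Vc (n : ℕ) := Idx n → ℂ

/-- The exterior algebra of ℂ^{2n}. -/
abbrev EA (n : ℕ) := ExteriorAlgebra ℂ (Vc n)

/-- Basis 1-vectors ω^A of the exterior algebra. -/
def ω {n : ℕ} (A : Idx n) : EA n := ExteriorAlgebra.ι ℂ (Pi.single A 1)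

/-- Ω_{2n} = ω⁰∧ω^n∧ω¹∧ω^{n+1}∧…∧ω^{n−1}∧ω^{2n−1}. -/
def Ωn (n : ℕ) : EA n := (List.ofFn fun l : Fin n => ω (inl l) * ω (inr l)).prod

/-- β_n = Σ_l ω^l∧ω^{n+l}. -/
def βn (n : ℕ) : EA n := ∑ l : Fin n, ω (inl l) * ω (inr l)

/-- Induced action of a 2n×2n complex matrix on the exterior algebra,
determined by N.ω^A = Σ_B N_{AB} ω^B. -/
def actE {n : ℕ} (N : Matrix (Idx n) (Idx n) ℂ) : EA n →ₐ[ℂ] EA n :=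
  ExteriorAlgebra.map (Matrix.mulVecLin Nᵀ)

/-- ℝ^{4n}. -/
abbrev V4 (n : ℕ) := Fin (4 * n) → ℝ

/-- The coordinate index 4l+β. -/
def X {n : ℕ} (l : Fin n) (β : Fin 4) : Fin (4 * n) :=
  ⟨4 * l.val + β.val, by have h1 := l.isLt; have h2 := β.isLt; omega⟩

/-- Partial derivative of a complex-valued function on ℝ^{4n}. -/
def pd {n : ℕ} (a : Fin (4 * n)) (f : V4 n → ℂ) : V4 n → ℂ :=
  fun q => fderiv ℝ f q (Pi.single a 1)

/-- The operators ∇_{Aα}, α = 0' (α=0) or 1' (α=1). -/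
def nabla {n : ℕ} (A : Idx n) (α : Fin 2) (f : V4 n → ℂ) : V4 n → ℂ :=
  fun q =>
    match A with
    | Sum.inl l =>
        if α = 0 then pd (X l 0) f q + Complex.I * pd (X l 1) f q
        else -pd (X l 2) f q - Complex.I * pd (X l 3) f q
    | Sum.inr l =>
        if α = 0 then pd (X l 2) f q - Complex.I * pd (X l 3) f q
        else pd (X l 0) f q - Complex.I * pd (X l 1) f q

/-- ∇_{Aα} applied to a real-valued function. -/
def nablaR {n : ℕ} (A : Idx n) (α : Fin 2) (u : V4 n → ℝ) : V4 n → ℂ :=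
  nabla A α (fun x => ((u x : ℝ) : ℂ))

/-- Δ_{AB}u = ½(∇_{A0'}∇_{B1'}u − ∇_{B0'}∇_{A1'}u). -/
def Delta {n : ℕ} (A B : Idx n) (u : V4 n → ℝ) : V4 n → ℂ :=
  fun q => (1 / 2 : ℂ) *
    (nabla A 0 (nabla B 1 (fun x => ((u x : ℝ) : ℂ))) q
      - nabla B 0 (nabla A 1 (fun x => ((u x : ℝ) : ℂ))) q)

/-- The Baston operator Δu = Σ_{A,B} Δ_{AB}u · ω^A∧ω^B. -/
def Baston {n : ℕ} (u : V4 n → ℝ) (q : V4 n) : EA n :=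
  ∑ A : Idx n, ∑ B : Idx n, Delta A B u q • (ω A * ω B)

/-- The quaternion units. -/
def iH : ℍ[ℝ] := ⟨0, 1, 0, 0⟩
def jH : ℍ[ℝ] := ⟨0, 0, 1, 0⟩
def kH : ℍ[ℝ] := ⟨0, 0, 0, 1⟩

/-- Partial derivative of a quaternion-valued function on ℝ^{4n}. -/
def pdH {n : ℕ} (a : Fin (4 * n)) (f : V4 n → ℍ[ℝ]) : V4 n → ℍ[ℝ] :=
  fun q => fderiv ℝ f q (Pi.single a 1)

/-- Partial derivative of a real-valued function on ℝ^{4n}. -/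
def pdR {n : ℕ} (a : Fin (4 * n)) (f : V4 n → ℝ) : V4 n → ℝ :=
  fun q => fderiv ℝ f q (Pi.single a 1)

/-- ∂u/∂q_k = (∂_{x_{4k}} − i∂_{x_{4k+1}} − j∂_{x_{4k+2}} − k∂_{x_{4k+3}})u for real u. -/
def dq {n : ℕ} (k : Fin n) (u : V4 n → ℝ) : V4 n → ℍ[ℝ] :=
  fun q => ⟨pdR (X k 0) u q, -pdR (X k 1) u q, -pdR (X k 2) u q, -pdR (X k 3) u q⟩

/-- ∂/∂q̄_l = ∂_{x_{4l}} + i∂_{x_{4l+1}} + j∂_{x_{4l+2}} + k∂_{x_{4l+3}} on ℍ-valued functions. -/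
def dqbar {n : ℕ} (l : Fin n) (f : V4 n → ℍ[ℝ]) : V4 n → ℍ[ℝ] :=
  fun q => pdH (X l 0) f q + iH * pdH (X l 1) f q + jH * pdH (X l 2) f q + kH * pdH (X l 3) f q

/-- The quaternionic Hessian of a real function u. -/
def Hess {n : ℕ} (u : V4 n → ℝ) (q : V4 n) : Matrix (Fin n) (Fin n) ℍ[ℝ] :=
  Matrix.of fun l k => dqbar l (dq k u) q

/-- ω^I = ω^{i₁}∧…∧ω^{i_p} for a multi-index I. -/
def ωProd {n p : ℕ} (I : Fin p → Idx n) : EA n :=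
  (List.ofFn fun j => ω (I j)).prod

/-- The Λ^pℂ^{2n}-valued function with coefficient functions f: F = Σ_I f_I ω^I. -/
def formVal {n p : ℕ} (f : (Fin p → Idx n) → V4 n → ℂ) (q : V4 n) : EA n :=
  ∑ I : Fin p → Idx n, f I q • ωProd I

/-- Coefficients of d_α F for F with coefficients f:
d_αF = Σ_{A,I} ∇_{Aα}f_I · ω^A∧ω^I. -/
def dcoef {n p : ℕ} (α : Fin 2) (f : (Fin p → Idx n) → V4 n → ℂ) :
    (Fin (p + 1) → Idx n) → V4 n → ℂ :=
  fun J => nabla (J 0) α (f (Fin.tail J))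

/-- Coefficients of the wedge product F∧G. -/
def wedgeCoef {n p q : ℕ} (f : (Fin p → Idx n) → V4 n → ℂ)
    (g : (Fin q → Idx n) → V4 n → ℂ) : (Fin (p + q) → Idx n) → V4 n → ℂ :=
  fun J x => f (fun i => J (Fin.castAdd q i)) x * g (fun i => J (Fin.natAdd p i)) x

/-- The complex coordinate functions z^{Aα}. -/
def zc {n : ℕ} (A : Idx n) (α : Fin 2) : V4 n → ℂ :=
  fun x =>
    match A with
    | Sum.inl l => if α = 0 then ⟨x (X l 0), -x (X l 1)⟩ else ⟨-x (X l 2), x (X l 3)⟩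
    | Sum.inr l => if α = 0 then ⟨x (X l 2), x (X l 3)⟩ else ⟨x (X l 0), x (X l 1)⟩

/-- The quaternionic vector associated to a point of ℝ^{4n}. -/
def quatv {n : ℕ} (v : V4 n) : Fin n → ℍ[ℝ] :=
  fun l => ⟨v (X l 0), v (X l 1), v (X l 2), v (X l 3)⟩

/-- The four real components of a quaternion. -/
def comp4 (q : ℍ[ℝ]) : Fin 4 → ℝ := ![q.re, q.imI, q.imJ, q.imK]

/-- The real-linear action of a quaternionic matrix 𝓤 on ℝ^{4n} ≅ ℍⁿ, q ↦ 𝓤q. -/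
def act {n : ℕ} (U : Matrix (Fin n) (Fin n) ℍ[ℝ]) (v : V4 n) : V4 n :=
  fun a => comp4 ((U *ᵥ quatv v) ⟨a.val / 4, by have := a.isLt; omega⟩)
    ⟨a.val % 4, by omega⟩


namespace Stmt4Aux

/-- build a quaternion from its two complex parts -/
def qmk (a b : ℂ) : ℍ[ℝ] := ⟨a.re, a.im, b.re, b.im⟩

lemma qa_star (q : ℍ[ℝ]) : qa (star q) = (starRingEnd ℂ) (qa q) := by
  simp [qa, Complex.ext_iff, Quaternion.re_star, Quaternion.imI_star]

lemma qb_star (q : ℍ[ℝ]) : qb (star q) = - qb q := by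
  simp [qb, Complex.ext_iff]

lemma qmk_mul (q : ℍ[ℝ]) (a b : ℂ) :
    q * qmk a b = qmk (qa q * a - qb q * (starRingEnd ℂ) b)
      (qa q * b + qb q * (starRingEnd ℂ) a) := by
  ext <;> simp only [Quaternion.re_mul, Quaternion.imI_mul, Quaternion.imJ_mul,
    Quaternion.imK_mul] <;> simp [qmk, qa, qb, Complex.mul_re, Complex.mul_im] <;> ring

lemma qmk_add (a b a' b' : ℂ) : qmk (a + a') (b + b') = qmk a b + qmk a' b' := by
  ext <;> simp only [Quaternion.re_add, Quaternion.imI_add, Quaternion.imJ_add,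
    Quaternion.imK_add] <;> simp [qmk]

lemma qmk_zero : qmk 0 0 = 0 := by ext <;> simp [qmk]

lemma sum_qmk {ι : Type*} (s : Finset ι) (f g : ι → ℂ) :
    ∑ k ∈ s, qmk (f k) (g k) = qmk (∑ k ∈ s, f k) (∑ k ∈ s, g k) := by
  induction s using Finset.cons_induction with
  | empty => simp [qmk_zero]
  | cons i s hi ih => simp [Finset.sum_cons, ih, qmk_add]

lemma real_mul_qmk (r : ℝ) (a b : ℂ) :
    (r : ℍ[ℝ]) * qmk a b = qmk ((r : ℂ) * a) ((r : ℂ) * b) := by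
  ext <;> simp only [Quaternion.re_mul, Quaternion.imI_mul, Quaternion.imJ_mul,
    Quaternion.imK_mul] <;> simp [qmk]

lemma normSq_qmk (a b : ℂ) :
    Quaternion.normSq (qmk a b) = Complex.normSq a + Complex.normSq b := by
  rw [Quaternion.normSq_def']; simp [qmk, Complex.normSq_apply] ; ring

lemma tau_isHermitian {n : ℕ} (M : Matrix (Fin n) (Fin n) ℍ[ℝ]) (hM : Mᴴ = M) :
    (tau M).IsHermitian := by
  have hM' : ∀ i j, star (M j i) = M i j := fun i j => congrFun (congrFun hM i) j
  unfold Matrix.IsHermitian tau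
  ext A B
  rcases A with i | i <;> rcases B with j | j <;>
    simp only [Matrix.conjTranspose_apply, Matrix.fromBlocks_apply₁₁,
      Matrix.fromBlocks_apply₁₂, Matrix.fromBlocks_apply₂₁, Matrix.fromBlocks_apply₂₂,
      conjM, Matrix.map_apply, Matrix.neg_apply, star_neg] <;>
    rw [← hM' i j]
  · rw [qa_star]; simp
  · rw [qb_star]; simp
  · rw [qb_star]; simp
  · rw [qa_star]; simp

end Stmt4Aux
namespace Stmt4Aux

lemma mulVec_tau {n : ℕ} (M : Matrix (Fin n) (Fin n) ℍ[ℝ]) (z : Idx n → ℂ) (l : Fin n) :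
    (M *ᵥ fun k => qmk (z (inl k)) ((starRingEnd ℂ) (z (inr k)))) l
      = qmk ((tau M *ᵥ z) (inl l)) ((starRingEnd ℂ) ((tau M *ᵥ z) (inr l))) := by
  simp only [Matrix.mulVec, dotProduct, qmk_mul, sum_qmk, Complex.conj_conj]
  rw [Fintype.sum_sum_type, Fintype.sum_sum_type, map_add, map_sum, map_sum]
  congr 1
  · simp [tau, conjM, sub_eq_add_neg, Finset.sum_add_distrib]
  · simp only [tau, conjM, Matrix.fromBlocks_apply₂₁, Matrix.fromBlocks_apply₂₂,
      Matrix.map_apply, _root_.map_mul, Complex.conj_conj, ← Finset.sum_add_distrib]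
    congr 1; ext k; ring

lemma exists_eigen {n : ℕ} (hn : 0 < n) (M : Matrix (Fin n) (Fin n) ℍ[ℝ]) (hM : Mᴴ = M) :
    ∃ (v : Fin n → ℍ[ℝ]) (lam : ℝ),
      (∑ k, star (v k) * v k) = 1 ∧ M *ᵥ v = fun k => ((lam : ℝ) : ℍ[ℝ]) * v k := by
  have hτ : (tau M).IsHermitian := tau_isHermitian M hM
  have : Nonempty (Idx n) := ⟨inl ⟨0, hn⟩⟩
  set i : Idx n := inl ⟨0, hn⟩
  set z : Idx n → ℂ := ⇑(hτ.eigenvectorBasis i) with hz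
  set lam : ℝ := hτ.eigenvalues i with hlam
  have hzeig : tau M *ᵥ z = lam • z := hτ.mulVec_eigenvectorBasis i
  have hznorm : ∑ A, (starRingEnd ℂ) (z A) * z A = 1 := by
    have h := hτ.eigenvectorBasis.orthonormal.1 i
    have h2 : @inner ℂ _ _ (hτ.eigenvectorBasis i) (hτ.eigenvectorBasis i) = 1 := by
      rw [@inner_self_eq_norm_sq_to_K ℂ]
      rw [h]; norm_num
    rw [PiLp.inner_apply] at h2
    simpa [RCLike.inner_apply, RCLike.conj_mul, hz] using h2
  refine ⟨fun l => qmk (z (inl l)) ((starRingEnd ℂ) (z (inr l))), lam, ?_, ?_⟩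
  · have : ∀ l : Fin n, star (qmk (z (inl l)) ((starRingEnd ℂ) (z (inr l)))) *
        qmk (z (inl l)) ((starRingEnd ℂ) (z (inr l)))
        = ((Complex.normSq (z (inl l)) + Complex.normSq (z (inr l)) : ℝ) : ℍ[ℝ]) := by
      intro l
      rw [Quaternion.star_mul_self, normSq_qmk]
      simp [Complex.normSq_conj]
    rw [Finset.sum_congr rfl (fun l _ => this l)]
    have hsum : ∑ A : Idx n, Complex.normSq (z A) = 1 := by
      have : ((∑ A : Idx n, Complex.normSq (z A) : ℝ) : ℂ) = 1 := by
        push_cast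
        rw [← hznorm]
        exact Finset.sum_congr rfl fun A _ => by
          rw [Complex.normSq_eq_conj_mul_self]
      exact_mod_cast this
    rw [Fintype.sum_sum_type] at hsum
    have hcoe : ∀ x : ℝ, ((x : ℝ) : ℍ[ℝ]) = algebraMap ℝ ℍ[ℝ] x := fun x => rfl
    simp only [hcoe, ← map_sum, Finset.sum_add_distrib, hsum, _root_.map_one]
  · funext l
    rw [mulVec_tau, hzeig]
    have h1 : (lam • z) (inl l) = (lam : ℂ) * z (inl l) := by
      simp [Complex.real_smul]
    have h2 : (starRingEnd ℂ) ((lam • z) (inr l)) = (lam : ℂ) * (starRingEnd ℂ) (z (inr l)) := by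
      simp [Complex.real_smul]
    rw [h1, h2, ← real_mul_qmk]

end Stmt4Aux
namespace Stmt4Aux

lemma householder {n : ℕ} (w : Fin n → ℍ[ℝ]) (hw : ∑ k, star (w k) * w k = 1)
    (i : Fin n) (r : ℝ) (hw0 : w i = ((r : ℝ) : ℍ[ℝ])) :
    ∃ H : Matrix (Fin n) (Fin n) ℍ[ℝ], Hᴴ = H ∧ H * H = 1 ∧
      H *ᵥ Pi.single i 1 = w := by
  by_cases hweq : w = Pi.single i 1
  · exact ⟨1, by simp, by simp, by rw [Matrix.one_mulVec, hweq]⟩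
  set d : Fin n → ℍ[ℝ] := fun k => w k - (Pi.single i 1 : Fin n → ℍ[ℝ]) k with hd
  set t : ℝ := 2 - 2 * r with ht
  -- the sum of |d k|^2 equals t
  have hsum_d : ∑ k, star (d k) * d k = ((t : ℝ) : ℍ[ℝ]) := by
    have expand : ∀ k, star (d k) * d k
        = star (w k) * w k - star (w k) * (Pi.single i 1 : Fin n → ℍ[ℝ]) k
          - star ((Pi.single i 1 : Fin n → ℍ[ℝ]) k) * w k
          + star ((Pi.single i 1 : Fin n → ℍ[ℝ]) k) * (Pi.single i 1 : Fin n → ℍ[ℝ]) k := by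
      intro k
      show star (w k - (Pi.single i 1 : Fin n → ℍ[ℝ]) k) * (w k - (Pi.single i 1 : Fin n → ℍ[ℝ]) k) = _
      rw [star_sub, sub_mul, mul_sub, mul_sub]
      abel
    rw [Finset.sum_congr rfl fun k _ => expand k]
    simp only [Finset.sum_add_distrib, Finset.sum_sub_distrib, hw]
    have h1 : ∑ k, star (w k) * (Pi.single i 1 : Fin n → ℍ[ℝ]) k = star (w i) := by
      rw [Finset.sum_eq_single i]
      · rw [Pi.single_eq_same, mul_one]
      · intro k _ hk; rw [Pi.single_eq_of_ne hk, mul_zero]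
      · intro h; exact absurd (Finset.mem_univ i) h
    have h2 : ∑ k, star ((Pi.single i 1 : Fin n → ℍ[ℝ]) k) * w k = w i := by
      rw [Finset.sum_eq_single i]
      · rw [Pi.single_eq_same, star_one, one_mul]
      · intro k _ hk; rw [Pi.single_eq_of_ne hk, star_zero, zero_mul]
      · intro h; exact absurd (Finset.mem_univ i) h
    have h3 : ∑ k, star ((Pi.single i 1 : Fin n → ℍ[ℝ]) k) * (Pi.single i 1 : Fin n → ℍ[ℝ]) k = 1 := by
      rw [Finset.sum_eq_single i]
      · rw [Pi.single_eq_same, star_one, one_mul]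
      · intro k _ hk; rw [Pi.single_eq_of_ne hk, star_zero, zero_mul]
      · intro h; exact absurd (Finset.mem_univ i) h
    rw [h1, h2, h3, hw0]
    have : star ((r : ℍ[ℝ])) = ((r : ℝ) : ℍ[ℝ]) := by
      rw [Quaternion.star_coe]
    rw [this, ht]
    ext <;> simp <;> ring
  -- t is positive
  have hd_ne : d ≠ 0 := by
    intro h
    apply hweq
    funext k
    have := congrFun h k
    simpa [hd, sub_eq_zero] using this
  have ht_pos : t ≠ 0 := by
    intro h0
    apply hd_ne
    have : ∑ k, Quaternion.normSq (d k) = 0 := by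
      have : ((∑ k, Quaternion.normSq (d k) : ℝ) : ℍ[ℝ]) = 0 := by
        have hcoe : ∀ x : ℝ, ((x : ℝ) : ℍ[ℝ]) = algebraMap ℝ ℍ[ℝ] x := fun x => rfl
        rw [hcoe, map_sum]
        simp only [← hcoe, ← Quaternion.star_mul_self]
        rw [hsum_d, h0]
        simp
      have h0' : ((∑ k, Quaternion.normSq (d k) : ℝ) : ℍ[ℝ]) = ((0:ℝ) : ℍ[ℝ]) := by
        simpa using this
      exact Quaternion.coe_injective h0'
    have hz := (Finset.sum_eq_zero_iff_of_nonneg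
      (fun k _ => Quaternion.normSq_nonneg (a := d k))).mp this
    funext k
    have := hz k (Finset.mem_univ k)
    exact Quaternion.normSq_eq_zero.mp this
  set c : ℝ := 2 / t with hc
  set D : Matrix (Fin n) (Fin n) ℍ[ℝ] := Matrix.of (fun a b => d a * star (d b)) with hD
  set H : Matrix (Fin n) (Fin n) ℍ[ℝ] := 1 - c • D with hH
  have hDD : D * D = t • D := by
    apply Matrix.ext
    intro a b
    simp only [Matrix.mul_apply, hD, Matrix.of_apply, Matrix.smul_apply]
    have hassoc : ∀ k, d a * star (d k) * (d k * star (d b))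
        = d a * ((star (d k) * d k) * star (d b)) := by intro k; simp [mul_assoc]
    rw [Finset.sum_congr rfl fun k _ => hassoc k, ← Finset.mul_sum, ← Finset.sum_mul, hsum_d,
      ← mul_assoc, Quaternion.mul_coe_eq_smul, smul_mul_assoc]
  refine ⟨H, ?_, ?_, ?_⟩
  · apply Matrix.ext
    intro a b
    simp only [hH, Matrix.sub_apply, Matrix.conjTranspose_apply, Matrix.one_apply,
      Matrix.smul_apply, hD, Matrix.of_apply, star_sub, star_smul, StarMul.star_mul, star_star]
    by_cases hab : a = b <;> simp [hab, eq_comm]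
  · have hct : c * c * t = c + c := by
      rw [hc]; field_simp; ring
    have expand : H * H = 1 - c • D - (c • D - c • (c • (D * D))) := by
      rw [hH, sub_mul, mul_sub, mul_sub, mul_one, one_mul, Matrix.smul_mul, Matrix.mul_smul,
        mul_one, Matrix.smul_mul]
    rw [expand, hDD, smul_smul, smul_smul, hct, add_smul]
    abel
  · funext a
    have hDe : (D *ᵥ Pi.single i 1) a = d a * ((r : ℝ) - 1 : ℍ[ℝ]) := by
      simp only [Matrix.mulVec, dotProduct, hD, Matrix.of_apply]
      rw [Finset.sum_eq_single i]
      · have : d i = ((r : ℝ) : ℍ[ℝ]) - 1 := by simp [hd, hw0]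
        rw [Pi.single_eq_same, mul_one, this]
        rw [star_sub, Quaternion.star_coe, star_one]
      · intro k _ hk; simp [Pi.single_apply, hk]
      · simp
    have : (H *ᵥ Pi.single i 1) a
        = (Pi.single i 1 : Fin n → ℍ[ℝ]) a - c • (d a * ((r : ℝ) - 1 : ℍ[ℝ])) := by
      simp only [hH, Matrix.sub_mulVec, Matrix.smul_mulVec, Pi.sub_apply,
        Pi.smul_apply, hDe, Matrix.one_mulVec]
    rw [this]
    have hr1 : ((r : ℝ) - 1 : ℍ[ℝ]) = ((r - 1 : ℝ) : ℍ[ℝ]) := by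
      ext <;> simp
    rw [hr1, Quaternion.mul_coe_eq_smul, smul_smul]
    have : c * (r - 1) = -1 := by
      rw [hc]; field_simp; rw [ht]; ring
    rw [this]
    simp [hd]

end Stmt4Aux
namespace Stmt4Aux

lemma main_diag : ∀ (n : ℕ) (M : Matrix (Fin n) (Fin n) ℍ[ℝ]), Mᴴ = M →
    ∃ E : Matrix (Fin n) (Fin n) ℍ[ℝ], Eᴴ * E = 1 ∧ E * Eᴴ = 1 ∧
      ∃ d : Fin n → ℝ, Eᴴ * M * E = Matrix.diagonal (fun i => ((d i : ℝ) : ℍ[ℝ])) := by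
  intro n
  induction n with
  | zero =>
    intro M hM
    refine ⟨1, by simp, by simp, fun _ => 0, ?_⟩
    apply Matrix.ext; intro i j; exact i.elim0
  | succ m ih =>
    intro M hM
    classical
    obtain ⟨v, lam, hv1, hveig⟩ := exists_eigen (Nat.succ_pos m) M hM
    set r : ℝ := ‖v 0‖ with hr
    set u : ℍ[ℝ] := if v 0 = 0 then 1 else star (v 0) * ((r⁻¹ : ℝ) : ℍ[ℝ]) with hu
    have hu_unit : star u * u = 1 := by
      rw [hu]
      split_ifs with h
      · simp
      · have hr0 : r ≠ 0 := by simpa [hr, norm_eq_zero] using h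
        rw [StarMul.star_mul, star_star, Quaternion.star_coe, mul_assoc,
          ← mul_assoc (v 0), Quaternion.self_mul_star, ← Quaternion.coe_mul,
          ← Quaternion.coe_mul, ← Quaternion.coe_one]
        congr 1
        rw [Quaternion.normSq_eq_norm_mul_self, ← hr]
        field_simp
    set w : Fin (m+1) → ℍ[ℝ] := fun k => v k * u with hwdef
    have step : ∀ k, star (w k) * w k = star (v k) * v k * (star u * u) := by
      intro k
      show star (v k * u) * (v k * u) = _
      rw [StarMul.star_mul, mul_assoc, ← mul_assoc (star (v k)), Quaternion.star_mul_self]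
      simp only [Quaternion.coe_mul_eq_smul]
      rw [mul_smul_comm]
    have hw1 : ∑ k, star (w k) * w k = 1 := by
      rw [Finset.sum_congr rfl fun k _ => step k, hu_unit]
      simp only [mul_one]
      exact hv1
    have hw_eig : M *ᵥ w = fun k => ((lam : ℝ) : ℍ[ℝ]) * w k := by
      funext k
      have h1 : (M *ᵥ w) k = (M *ᵥ v) k * u := by
        show ∑ j, M k j * (v j * u) = (∑ j, M k j * v j) * u
        rw [Finset.sum_mul]
        exact Finset.sum_congr rfl fun j _ => (mul_assoc _ _ _).symm
      rw [h1, congrFun hveig k, mul_assoc]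
    have hw0 : w 0 = ((r : ℝ) : ℍ[ℝ]) := by
      show v 0 * u = _
      rw [hu]
      split_ifs with h
      · simp [h, hr]
      · rw [← mul_assoc, Quaternion.self_mul_star, ← Quaternion.coe_mul]
        have hr0 : r ≠ 0 := by simpa [hr, norm_eq_zero] using h
        congr 1
        rw [Quaternion.normSq_eq_norm_mul_self, ← hr]
        field_simp
    obtain ⟨H, hH, hH2, hHe⟩ := householder w hw1 0 r hw0
    set M₁ : Matrix (Fin (m+1)) (Fin (m+1)) ℍ[ℝ] := H * M * H with hM₁def
    have hM₁herm : M₁ᴴ = M₁ := by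
      rw [hM₁def, Matrix.conjTranspose_mul, Matrix.conjTranspose_mul, hH, hM, ← mul_assoc]
    have hcol : ∀ a, M₁ a 0 = if a = 0 then ((lam : ℝ) : ℍ[ℝ]) else 0 := by
      have hHw : H *ᵥ w = Pi.single 0 1 := by
        rw [← hHe, Matrix.mulVec_mulVec, hH2, Matrix.one_mulVec]
      have h1 : M₁ *ᵥ Pi.single 0 1
          = fun k => ((lam : ℝ) : ℍ[ℝ]) * (Pi.single 0 1 : Fin (m+1) → ℍ[ℝ]) k := by
        rw [hM₁def, ← Matrix.mulVec_mulVec, ← Matrix.mulVec_mulVec, hHe, hw_eig]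
        have h2 : (fun k => ((lam : ℝ) : ℍ[ℝ]) * w k) = lam • w := by
          funext k; rw [Pi.smul_apply, Quaternion.coe_mul_eq_smul]
        rw [h2, Matrix.mulVec_smul, hHw]
        funext k
        rw [Pi.smul_apply, Quaternion.coe_mul_eq_smul]
      intro a
      have h3 : M₁ a 0 = (M₁ *ᵥ Pi.single 0 1) a := by
        simp [Matrix.mulVec_single]
      rw [h3, h1]
      by_cases h : a = 0 <;> simp [h, Pi.single_apply]
    have hrow : ∀ b, M₁ 0 b = if b = 0 then ((lam : ℝ) : ℍ[ℝ]) else 0 := by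
      intro b
      have h4 := congrFun (congrFun hM₁herm 0) b
      rw [Matrix.conjTranspose_apply] at h4
      rw [← h4, hcol b]
      split_ifs <;> simp [Quaternion.star_coe]
    set N : Matrix (Fin m) (Fin m) ℍ[ℝ] := Matrix.of (fun i j => M₁ i.succ j.succ) with hNdef
    have hNherm : Nᴴ = N := by
      apply Matrix.ext; intro i j
      have h5 := congrFun (congrFun hM₁herm i.succ) j.succ
      rw [Matrix.conjTranspose_apply] at h5
      rw [Matrix.conjTranspose_apply]
      exact h5
    obtain ⟨F, hF1, hF2, d', hFd⟩ := ih N hNherm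
    set e : Fin 1 ⊕ Fin m ≃ Fin (m+1) := finSumFinEquiv.trans (finCongr (Nat.add_comm 1 m))
      with he
    have he_inl : ∀ i : Fin 1, e (inl i) = 0 := by
      intro i
      apply Fin.ext
      have : (i : ℕ) = 0 := by omega
      simp [he, this]
    have he_inr : ∀ j : Fin m, e (inr j) = j.succ := by
      intro j
      apply Fin.ext
      simp [he]
      try omega
    have hM₁blocks : M₁.submatrix e e
        = Matrix.fromBlocks (Matrix.diagonal fun _ : Fin 1 => ((lam : ℝ) : ℍ[ℝ])) 0 0 N := by
      apply Matrix.ext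
      rintro (i | i) (j | j) <;>
        simp only [Matrix.submatrix_apply, he_inl, he_inr, Matrix.fromBlocks_apply₁₁,
          Matrix.fromBlocks_apply₁₂, Matrix.fromBlocks_apply₂₁, Matrix.fromBlocks_apply₂₂]
      · have hij : i = j := Subsingleton.elim i j
        subst hij
        rw [hcol 0, Matrix.diagonal_apply_eq]
        simp
      · rw [hrow]
        simp [Fin.succ_ne_zero]
      · rw [hcol]
        simp [Fin.succ_ne_zero]
      · rfl
    set G : Matrix (Fin (m+1)) (Fin (m+1)) ℍ[ℝ] :=
      (Matrix.fromBlocks (1 : Matrix (Fin 1) (Fin 1) ℍ[ℝ]) 0 0 F).submatrix e.symm e.symm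
      with hGdef
    have hGct : Gᴴ = (Matrix.fromBlocks (1 : Matrix (Fin 1) (Fin 1) ℍ[ℝ]) 0 0
        Fᴴ).submatrix e.symm e.symm := by
      rw [hGdef, Matrix.conjTranspose_submatrix, Matrix.fromBlocks_conjTranspose]
      simp
    have mulsub : ∀ A B : Matrix (Fin 1 ⊕ Fin m) (Fin 1 ⊕ Fin m) ℍ[ℝ],
        A.submatrix e.symm e.symm * B.submatrix e.symm e.symm
          = (A * B).submatrix e.symm e.symm := fun A B =>
      Matrix.submatrix_mul_equiv A B _ e.symm _
    have hGG : Gᴴ * G = 1 := by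
      rw [hGct, hGdef, mulsub, Matrix.fromBlocks_multiply]
      simp [hF1, Matrix.fromBlocks_one]
    have hGG' : G * Gᴴ = 1 := by
      rw [hGct, hGdef, mulsub, Matrix.fromBlocks_multiply]
      simp [hF2, Matrix.fromBlocks_one]
    refine ⟨H * G, ?_, ?_, ?_⟩
    · rw [Matrix.conjTranspose_mul, hH, mul_assoc, ← mul_assoc H H G, hH2, one_mul, hGG]
    · rw [Matrix.conjTranspose_mul, hH, ← mul_assoc, mul_assoc H G, hGG', mul_one, hH2]
    · refine ⟨fun i => Sum.elim (fun _ : Fin 1 => lam) d' (e.symm i), ?_⟩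
      have key : (H * G)ᴴ * M * (H * G) = Gᴴ * M₁ * G := by
        rw [hM₁def]
        simp only [Matrix.conjTranspose_mul, hH, mul_assoc]
      rw [key]
      have hM₁back : M₁ = (Matrix.fromBlocks
          (Matrix.diagonal fun _ : Fin 1 => ((lam : ℝ) : ℍ[ℝ])) 0 0 N).submatrix
          e.symm e.symm := by
        rw [← hM₁blocks, Matrix.submatrix_submatrix, Equiv.self_comp_symm,
          Matrix.submatrix_id_id]
      rw [hM₁back, hGct, hGdef, mulsub, mulsub, Matrix.fromBlocks_multiply,
        Matrix.fromBlocks_multiply]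
      simp only [Matrix.one_mul, Matrix.mul_one, Matrix.zero_mul, Matrix.mul_zero,
        add_zero, zero_add, Matrix.mul_zero, Matrix.zero_mul]
      rw [hFd, Matrix.fromBlocks_diagonal, Matrix.submatrix_diagonal_equiv]
      have hfun : (((fun _ : Fin 1 => ((lam : ℝ) : ℍ[ℝ])) ⊕ᵥ (fun i => ((d' i : ℝ) : ℍ[ℝ])))
            ∘ ⇑e.symm)
          = fun i => ((Sum.elim (fun _ : Fin 1 => lam) d' (e.symm i) : ℝ) : ℍ[ℝ]) := by
        funext i
        rcases h : e.symm i with j | j <;> simp [h]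
      rw [hfun]

end Stmt4Aux
/-- every hyperhermitian quaternionic matrix is diagonalizable with
real diagonal entries by a quaternionic unitary matrix. -/
theorem stmt_4 {n : ℕ} (M : Matrix (Fin n) (Fin n) ℍ[ℝ]) (hM : Mᴴ = M) :
    ∃ E : Matrix (Fin n) (Fin n) ℍ[ℝ], Eᴴ * E = 1 ∧ E * Eᴴ = 1 ∧
      ∃ d : Fin n → ℝ, Eᴴ * M * E = Matrix.diagonal (fun i => ((d i : ℝ) : ℍ[ℝ])) :=
  Stmt4Aux.main_diag n M hM

end
end

section
/- Let M ∈ M_ℂ(2n,2n) be skew-symmetric. Then J·conj(M) = M·J (this is the condition that the 2-form ω = Σ_{A,B} M_{AB} ω^A∧ω^B is real, i.e., fixed by the conjugate-linear action ρ(j) induced by quaternion multiplication by j) if and only if there exists a hyperhermitian quaternionic matrix 𝓜 ∈ M_ℍ(n,n) such that M = τ(𝓜)·J. -/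
open scoped Quaternion
open Matrix Sum

noncomputable section

/-- for skew-symmetric M, the reality condition J·conj(M) = M·J holds
iff M = τ(𝓜)·J for some hyperhermitian quaternionic matrix 𝓜. -/
theorem stmt_6 {n : ℕ} (M : Matrix (Idx n) (Idx n) ℂ) (hskew : Mᵀ = -M) :
    Jmat n * conjM M = M * Jmat n ↔
      ∃ Q : Matrix (Fin n) (Fin n) ℍ[ℝ], Qᴴ = Q ∧ M = tau Q * Jmat n := by
  have hsk : ∀ A B, M B A = -M A B := fun A B => by
    have := congrFun (congrFun hskew A) B; simpa [Matrix.transpose_apply] using this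
  constructor
  · intro h
    have e3 : ∀ l k : Fin n, M (inr l) (inr k) = starRingEnd ℂ (M (inl l) (inl k)) := by
      intro l k
      have := congrFun (congrFun h (inr l)) (inl k)
      simp [Jmat, conjM, Matrix.mul_apply, Fintype.sum_sum_type, Matrix.one_apply] at this
      exact this.symm
    have e4 : ∀ l k : Fin n, M (inr l) (inl k) = -starRingEnd ℂ (M (inl l) (inr k)) := by
      intro l k
      have := congrFun (congrFun h (inr l)) (inr k)
      simp [Jmat, conjM, Matrix.mul_apply, Fintype.sum_sum_type, Matrix.one_apply] at this
      exact this.symm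
    have h5 : ∀ l k : Fin n, M (inl k) (inr l) = starRingEnd ℂ (M (inl l) (inr k)) := by
      intro l k
      have := e4 l k
      rw [hsk (inl k) (inr l)] at this
      linear_combination -this
    refine ⟨Matrix.of fun l k =>
      ⟨(M (inl l) (inr k)).re, (M (inl l) (inr k)).im,
       (M (inl l) (inl k)).re, (M (inl l) (inl k)).im⟩, ?_, ?_⟩
    · ext l k
      all_goals simp only [Matrix.conjTranspose_apply, Matrix.of_apply, star,
        QuaternionAlgebra.instStarQuaternionAlgebra]
      all_goals erw [Matrix.of_apply, Matrix.of_apply]; dsimp only [Quaternion.instStar._aux_1]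
      · have := congrArg Complex.re (h5 l k); simpa using this
      · have := congrArg Complex.im (h5 l k); simp at this; linarith
      · have := congrArg Complex.re (hsk (inl l) (inl k)); simp at this; linarith
      · have := congrArg Complex.im (hsk (inl l) (inl k)); simp at this; linarith
    · ext A B
      rcases A with l | l <;> rcases B with k | k <;>
        simp [tau, Jmat, qa, qb, conjM, Matrix.mul_apply, Fintype.sum_sum_type,
          Matrix.one_apply, e3, e4, Complex.ext_iff] <;> erw [Matrix.of_apply] <;> simp
  · rintro ⟨Q, -, rfl⟩
    ext A B
    rcases A with l | l <;> rcases B with k | k <;>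
      simp [tau, Jmat, conjM, Matrix.mul_apply, Fintype.sum_sum_type, Matrix.one_apply]

end
end

section
/- For every quaternionic unitary matrix 𝓜 ∈ U_ℍ(n), the induced action of τ(𝓜) on the exterior algebra of ℂ^{2n} fixes both β_n and Ω_{2n}: τ(𝓜).β_n = β_n and τ(𝓜).Ω_{2n} = Ω_{2n}. -/
open scoped Quaternion
open Matrix Sum

noncomputable section

variable {n : ℕ}

lemma my_sum_pow_succ {R : Type*} [Ring R] (x S : R) (h : Commute x S) (hx : x * x = 0) :
    ∀ m : ℕ, (x + S) ^ (m + 1) = S ^ (m + 1) + (m + 1) • (x * S ^ m) := by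
  intro m
  induction m with
  | zero => simp [add_comm]
  | succ m ih =>
    have hc1 : S ^ (m + 1) * x = x * S ^ (m + 1) := (h.symm.pow_left (m + 1)).eq
    have hc0 : S ^ m * x = x * S ^ m := (h.symm.pow_left m).eq
    calc (x + S) ^ (m + 2) = ((x + S) ^ (m + 1)) * (x + S) := by rw [pow_succ]
      _ = (S ^ (m + 1) + (m + 1) • (x * S ^ m)) * (x + S) := by rw [ih]
      _ = S ^ (m + 1) * x + S ^ (m + 1) * S + (m + 1) • (x * S ^ m * x) + (m + 1) • (x * S ^ m * S) := by
          simp only [add_mul, mul_add, smul_mul_assoc]; abel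
      _ = x * S ^ (m + 1) + S ^ (m + 2) + 0 + (m + 1) • (x * S ^ (m + 1)) := by
          rw [hc1, mul_assoc x (S ^ m) x, hc0, ← mul_assoc, hx, zero_mul, smul_zero,
            mul_assoc, ← pow_succ, ← pow_succ]
      _ = S ^ (m + 2) + (m + 2) • (x * S ^ (m + 1)) := by
          rw [add_zero, succ_nsmul (x * S ^ (m+1)) (m+1)]; abel

lemma my_list_key {R : Type*} [Ring R] :
    ∀ (L : List R), (∀ x ∈ L, x * x = 0) → (L.Pairwise Commute) →
      (∀ k, L.length < k → L.sum ^ k = 0) ∧ L.sum ^ L.length = Nat.factorial L.length • L.prod := by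
  intro L
  induction L with
  | nil =>
    intro _ _
    constructor
    · intro k hk; rw [List.sum_nil]; exact zero_pow (by omega)
    · simp
  | cons x L ih =>
    intro hsq hpw
    obtain ⟨ihz, ihp⟩ := ih (fun y hy => hsq y (List.mem_cons_of_mem _ hy)) hpw.of_cons
    have hx : x * x = 0 := hsq x List.mem_cons_self
    have hcomm : Commute x L.sum := Commute.list_sum_right _ _ (List.pairwise_cons.mp hpw).1
    constructor
    · intro k hk
      simp only [List.length_cons] at hk
      obtain ⟨m, rfl⟩ : ∃ m, k = m + 1 := ⟨k - 1, by omega⟩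
      rw [List.sum_cons, my_sum_pow_succ x L.sum hcomm hx m, ihz _ (by omega),
        ihz _ (by omega), mul_zero, smul_zero, add_zero]
    · simp only [List.length_cons, List.sum_cons, List.prod_cons]
      rw [my_sum_pow_succ x L.sum hcomm hx L.length, ihz _ (by omega), ihp, zero_add,
        mul_smul_comm, smul_smul, Nat.factorial_succ]

variable {n : ℕ}

lemma omega_anti (A B : Idx n) : ω B * ω A = -(ω A * ω B) := by
  unfold ω
  exact eq_neg_of_add_eq_zero_left (ExteriorAlgebra.ι_add_mul_swap _ _)

lemma omega_sq (A : Idx n) : ω A * ω A = 0 := ExteriorAlgebra.ι_sq_zero _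

lemma omega_comm4 (A B C D : Idx n) : (ω A * ω B) * (ω C * ω D) = (ω C * ω D) * (ω A * ω B) := by
  calc (ω A * ω B) * (ω C * ω D) = ω A * (ω B * ω C) * ω D := by noncomm_ring
    _ = ω A * (-(ω C * ω B)) * ω D := by rw [omega_anti C B]
    _ = -((ω A * ω C) * (ω B * ω D)) := by noncomm_ring
    _ = -((-(ω C * ω A)) * (-(ω D * ω B))) := by rw [omega_anti C A, omega_anti D B]
    _ = -(ω C * (ω A * ω D) * ω B) := by noncomm_ring
    _ = -(ω C * (-(ω D * ω A)) * ω B) := by rw [omega_anti D A]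
    _ = (ω C * ω D) * (ω A * ω B) := by noncomm_ring

lemma omega_sqE (A B : Idx n) : (ω A * ω B) * (ω A * ω B) = 0 := by
  calc (ω A * ω B) * (ω A * ω B) = ω A * (ω B * ω A) * ω B := by noncomm_ring
    _ = ω A * (-(ω A * ω B)) * ω B := by rw [omega_anti A B]
    _ = -((ω A * ω A) * (ω B * ω B)) := by noncomm_ring
    _ = 0 := by rw [omega_sq]; simp

lemma actE_omega (N : Matrix (Idx n) (Idx n) ℂ) (A : Idx n) :
    actE N (ω A) = ∑ B, N A B • ω B := by
  unfold actE ω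
  rw [ExteriorAlgebra.map_apply_ι]
  have h : (Matrix.mulVecLin Nᵀ) (Pi.single A 1) = ∑ B : Idx n, N A B • (Pi.single B 1 : Vc n) := by
    funext C
    simp [Matrix.mulVecLin_apply, Matrix.mulVec, dotProduct, Pi.single_apply,
      Finset.sum_apply, mul_ite, Finset.sum_ite_eq, Finset.sum_ite_eq']
  rw [h, map_sum]
  simp

lemma actE_pair (N : Matrix (Idx n) (Idx n) ℂ) (A B : Idx n) :
    actE N (ω A * ω B) = ∑ C, ∑ D, (N A C * N B D) • (ω C * ω D) := by
  rw [_root_.map_mul, actE_omega, actE_omega, Finset.sum_mul_sum]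
  exact Finset.sum_congr rfl fun C _ => Finset.sum_congr rfl fun D _ => smul_mul_smul_comm _ _ _ _

lemma q2_sym_zero (h : Idx n → Idx n → ℂ) (hs : ∀ C D, h C D = h D C) :
    ∑ C : Idx n, ∑ D : Idx n, h C D • (ω C * ω D) = 0 := by
  set Q := ∑ C : Idx n, ∑ D : Idx n, h C D • (ω C * ω D) with hQ
  have key : Q = -Q := by
    calc Q = ∑ D : Idx n, ∑ C : Idx n, h C D • (ω C * ω D) := Finset.sum_comm
      _ = ∑ C : Idx n, ∑ D : Idx n, h C D • (ω D * ω C) := by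
          refine Finset.sum_congr rfl fun C _ => Finset.sum_congr rfl fun D _ => ?_
          rw [hs]
      _ = -Q := by
          rw [hQ, ← Finset.sum_neg_distrib]
          refine Finset.sum_congr rfl fun C _ => ?_
          rw [← Finset.sum_neg_distrib]
          refine Finset.sum_congr rfl fun D _ => ?_
          rw [omega_anti, smul_neg]
  have h2 : (2:ℂ) • Q = 0 := by rw [two_smul]; nth_rewrite 1 [key]; simp
  have := smul_eq_zero.mp h2
  simpa using this

/-- coefficient function of βn -/
def Sfun (n : ℕ) : Idx n → Idx n → ℂ :=
  fun C D => match C, D with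
    | inl c, inr d => if c = d then 1 else 0
    | _, _ => 0


lemma Sfun_sub (C D : Idx n) : Sfun n C D - Sfun n D C = Jmat n C D := by
  rcases C with c | c <;> rcases D with d | d <;>
    simp [Sfun, Jmat, Matrix.one_apply, Matrix.fromBlocks, eq_comm]

lemma beta_eq : βn n = ∑ C : Idx n, ∑ D : Idx n, Sfun n C D • (ω C * ω D) := by
  rw [Fintype.sum_sum_type]
  simp only [Fintype.sum_sum_type, Sfun]
  simp [βn, Finset.sum_ite_eq']

lemma actE_beta (N : Matrix (Idx n) (Idx n) ℂ) :
    actE N (βn n) = ∑ C : Idx n, ∑ D : Idx n,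
      (∑ l : Fin n, N (inl l) C * N (inr l) D) • (ω C * ω D) := by
  unfold βn
  rw [map_sum]
  calc ∑ l : Fin n, actE N (ω (inl l) * ω (inr l))
      = ∑ l : Fin n, ∑ C : Idx n, ∑ D : Idx n, (N (inl l) C * N (inr l) D) • (ω C * ω D) :=
        Finset.sum_congr rfl fun l _ => actE_pair N _ _
    _ = ∑ C : Idx n, ∑ l : Fin n, ∑ D : Idx n, (N (inl l) C * N (inr l) D) • (ω C * ω D) :=
        Finset.sum_comm
    _ = ∑ C : Idx n, ∑ D : Idx n, ∑ l : Fin n, (N (inl l) C * N (inr l) D) • (ω C * ω D) :=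
        Finset.sum_congr rfl fun C _ => Finset.sum_comm
    _ = _ := Finset.sum_congr rfl fun C _ => Finset.sum_congr rfl fun D _ =>
        (Finset.sum_smul).symm

lemma fix_beta (N : Matrix (Idx n) (Idx n) ℂ)
    (hJ : ∀ C D : Idx n, (∑ l : Fin n, N (inl l) C * N (inr l) D)
      - (∑ l : Fin n, N (inl l) D * N (inr l) C) = Jmat n C D) :
    actE N (βn n) = βn n := by
  have hsub : actE N (βn n) - βn n
      = ∑ C : Idx n, ∑ D : Idx n,
        ((∑ l : Fin n, N (inl l) C * N (inr l) D) - Sfun n C D) • (ω C * ω D) := by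
    rw [actE_beta, beta_eq, ← Finset.sum_sub_distrib]
    refine Finset.sum_congr rfl fun C _ => ?_
    rw [← Finset.sum_sub_distrib]
    exact Finset.sum_congr rfl fun D _ => (sub_smul _ _ _).symm
  have hsym : ∀ C D : Idx n,
      (∑ l : Fin n, N (inl l) C * N (inr l) D) - Sfun n C D
        = (∑ l : Fin n, N (inl l) D * N (inr l) C) - Sfun n D C := by
    intro C D
    have h1 := hJ C D
    have h2 := Sfun_sub (n := n) C D
    linear_combination h1 - h2
  have hz := q2_sym_zero (fun C D => (∑ l : Fin n, N (inl l) C * N (inr l) D) - Sfun n C D) hsym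
  rw [hz] at hsub
  exact sub_eq_zero.mp hsub

lemma beta_pow : (βn n) ^ n = Nat.factorial n • Ωn n := by
  have key := my_list_key (List.ofFn fun l : Fin n => ω (inl l) * ω (inr l))
    (by
      intro x hx
      rw [List.mem_ofFn] at hx
      obtain ⟨l, rfl⟩ := hx
      exact omega_sqE _ _)
    (by
      rw [List.pairwise_ofFn]
      intro i j _
      exact omega_comm4 _ _ _ _)
  have h2 := key.2
  rw [List.length_ofFn, List.sum_ofFn] at h2
  exact h2.trans rfl


lemma qa_add (p q : ℍ[ℝ]) : qa (p + q) = qa p + qa q := by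
  apply Complex.ext <;> simp [qa]

lemma qb_add (p q : ℍ[ℝ]) : qb (p + q) = qb p + qb q := by
  apply Complex.ext <;> simp [qb]

lemma qa_mul (p q : ℍ[ℝ]) :
    qa (p * q) = qa p * qa q - qb p * (starRingEnd ℂ) (qb q) := by
  apply Complex.ext <;>
    simp [qa, qb, Quaternion.re_mul, Quaternion.imI_mul, Complex.mul_re, Complex.mul_im] <;>
    ring

lemma qb_mul (p q : ℍ[ℝ]) :
    qb (p * q) = qa p * qb q + qb p * (starRingEnd ℂ) (qa q) := by
  apply Complex.ext <;>
    simp [qa, qb, Quaternion.imJ_mul, Quaternion.imK_mul, Complex.mul_re, Complex.mul_im] <;>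
    ring

lemma qa_star (q : ℍ[ℝ]) : qa (star q) = (starRingEnd ℂ) (qa q) := by
  apply Complex.ext <;> simp [qa]

lemma qb_star (q : ℍ[ℝ]) : qb (star q) = -qb q := by
  apply Complex.ext <;> simp [qb]

lemma qa_one : qa 1 = 1 := by apply Complex.ext <;> simp [qa]
lemma qa_zero : qa 0 = 0 := by apply Complex.ext <;> simp [qa]
lemma qb_one : qb 1 = 0 := by apply Complex.ext <;> simp [qb]
lemma qb_zero : qb 0 = 0 := by apply Complex.ext <;> simp [qb]

def qaF : ℍ[ℝ] →+ ℂ := AddMonoidHom.mk' qa qa_add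
def qbF : ℍ[ℝ] →+ ℂ := AddMonoidHom.mk' qb qb_add

lemma qa_sum {ι : Type*} (s : Finset ι) (f : ι → ℍ[ℝ]) :
    qa (∑ i ∈ s, f i) = ∑ i ∈ s, qa (f i) := map_sum qaF f s

lemma qb_sum {ι : Type*} (s : Finset ι) (f : ι → ℍ[ℝ]) :
    qb (∑ i ∈ s, f i) = ∑ i ∈ s, qb (f i) := map_sum qbF f s

lemma symp {n : ℕ} (M : Matrix (Fin n) (Fin n) ℍ[ℝ]) (hM1 : Mᴴ * M = 1) (C D : Idx n) :
    (∑ l : Fin n, tau M (inl l) C * tau M (inr l) D)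
      - (∑ l : Fin n, tau M (inl l) D * tau M (inr l) C) = Jmat n C D := by
  have hE : ∀ c d : Fin n, ∑ l : Fin n, star (M l c) * M l d
      = if c = d then (1:ℍ[ℝ]) else 0 := by
    intro c d
    have h : (Mᴴ * M) c d = (1 : Matrix (Fin n) (Fin n) ℍ[ℝ]) c d := by rw [hM1]
    simpa [Matrix.mul_apply, Matrix.conjTranspose_apply, Matrix.one_apply] using h
  have hE1 : ∀ c d : Fin n,
      ∑ l : Fin n, ((starRingEnd ℂ) (qa (M l c)) * qa (M l d)
        + qb (M l c) * (starRingEnd ℂ) (qb (M l d))) = if c = d then 1 else 0 := by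
    intro c d
    have h : ∑ l : Fin n, qa (star (M l c) * M l d)
        = qa (if c = d then 1 else 0) := by
      rw [← qa_sum]
      exact congrArg qa (hE c d)
    calc ∑ l : Fin n, ((starRingEnd ℂ) (qa (M l c)) * qa (M l d)
          + qb (M l c) * (starRingEnd ℂ) (qb (M l d)))
        = ∑ l : Fin n, qa (star (M l c) * M l d) := by
          refine Finset.sum_congr rfl fun l _ => ?_
          rw [qa_mul, qa_star, qb_star]
          ring
      _ = if c = d then 1 else 0 := by
          rw [h]; split <;> simp [qa_one, qa_zero]
  have hE2 : ∀ c d : Fin n,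
      ∑ l : Fin n, ((starRingEnd ℂ) (qa (M l c)) * qb (M l d)
        - qb (M l c) * (starRingEnd ℂ) (qa (M l d))) = 0 := by
    intro c d
    have h : ∑ l : Fin n, qb (star (M l c) * M l d)
        = qb (if c = d then 1 else 0) := by
      rw [← qb_sum]
      exact congrArg qb (hE c d)
    calc ∑ l : Fin n, ((starRingEnd ℂ) (qa (M l c)) * qb (M l d)
          - qb (M l c) * (starRingEnd ℂ) (qa (M l d)))
        = ∑ l : Fin n, qb (star (M l c) * M l d) := by
          refine Finset.sum_congr rfl fun l _ => ?_
          rw [qb_mul, qa_star, qb_star]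
          ring
      _ = 0 := by rw [h]; split <;> simp [qb_one, qb_zero]
  have t11 : ∀ l c, tau M (inl l) (inl c) = qa (M l c) := fun l c => rfl
  have t12 : ∀ l c, tau M (inl l) (inr c) = -qb (M l c) := fun l c => rfl
  have t21 : ∀ l c, tau M (inr l) (inl c) = (starRingEnd ℂ) (qb (M l c)) := fun l c => rfl
  have t22 : ∀ l c, tau M (inr l) (inr c) = (starRingEnd ℂ) (qa (M l c)) := fun l c => rfl
  rw [← Finset.sum_sub_distrib]
  rcases C with c | c <;> rcases D with d | d
  · -- inl, inl : use conj of hE2 d c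
    have h := congrArg (starRingEnd ℂ) (hE2 d c)
    rw [map_sum, map_zero] at h
    simp only [map_sub, _root_.map_mul, Complex.conj_conj] at h
    calc ∑ l : Fin n, (tau M (inl l) (inl c) * tau M (inr l) (inl d)
            - tau M (inl l) (inl d) * tau M (inr l) (inl c))
        = ∑ l : Fin n, -(qa (M l d) * (starRingEnd ℂ) (qb (M l c))
            - (starRingEnd ℂ) (qb (M l d)) * qa (M l c)) := by
          refine Finset.sum_congr rfl fun l _ => ?_
          rw [t11, t21, t11, t21]; ring
      _ = Jmat n (inl c) (inl d) := by
          rw [Finset.sum_neg_distrib, h, neg_zero]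
          simp [Jmat]
  · -- inl, inr : use conj of hE1 c d
    have h := congrArg (starRingEnd ℂ) (hE1 c d)
    rw [map_sum] at h
    simp only [map_add, _root_.map_mul, Complex.conj_conj] at h
    calc ∑ l : Fin n, (tau M (inl l) (inl c) * tau M (inr l) (inr d)
            - tau M (inl l) (inr d) * tau M (inr l) (inl c))
        = ∑ l : Fin n, (qa (M l c) * (starRingEnd ℂ) (qa (M l d))
            + (starRingEnd ℂ) (qb (M l c)) * qb (M l d)) := by
          refine Finset.sum_congr rfl fun l _ => ?_
          rw [t11, t22, t12, t21]; ring
      _ = Jmat n (inl c) (inr d) := by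
          rw [h]; simp [Jmat, Matrix.one_apply, apply_ite]
  · -- inr, inl : use -(hE1 c d)
    have h := hE1 c d
    calc ∑ l : Fin n, (tau M (inl l) (inr c) * tau M (inr l) (inl d)
            - tau M (inl l) (inl d) * tau M (inr l) (inr c))
        = ∑ l : Fin n, -((starRingEnd ℂ) (qa (M l c)) * qa (M l d)
            + qb (M l c) * (starRingEnd ℂ) (qb (M l d))) := by
          refine Finset.sum_congr rfl fun l _ => ?_
          rw [t12, t21, t11, t22]; ring
      _ = Jmat n (inr c) (inl d) := by
          rw [Finset.sum_neg_distrib, h]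
          simp [Jmat, Matrix.one_apply, apply_ite]
  · -- inr, inr : use hE2 c d
    have h := hE2 c d
    calc ∑ l : Fin n, (tau M (inl l) (inr c) * tau M (inr l) (inr d)
            - tau M (inl l) (inr d) * tau M (inr l) (inr c))
        = ∑ l : Fin n, ((starRingEnd ℂ) (qa (M l c)) * qb (M l d)
            - qb (M l c) * (starRingEnd ℂ) (qa (M l d))) := by
          refine Finset.sum_congr rfl fun l _ => ?_
          rw [t12, t22, t12, t22]; ring
      _ = Jmat n (inr c) (inr d) := by
          rw [h]; simp [Jmat]


/-- for quaternionic unitary 𝓜, the induced action of τ(𝓜) on the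
exterior algebra fixes β_n and Ω_{2n}. -/
theorem stmt_8 {n : ℕ} (M : Matrix (Fin n) (Fin n) ℍ[ℝ])
    (hM : Mᴴ * M = 1 ∧ M * Mᴴ = 1) :
    actE (tau M) (βn n) = βn n ∧ actE (tau M) (Ωn n) = Ωn n := by
  have hb : actE (tau M) (βn n) = βn n := fix_beta _ (symp M hM.1)
  refine ⟨hb, ?_⟩
  have h1 : Nat.factorial n • actE (tau M) (Ωn n) = Nat.factorial n • Ωn n := by
    rw [← map_nsmul, ← beta_pow, map_pow, hb, beta_pow]
  have h2 : (Nat.factorial n : ℂ) • actE (tau M) (Ωn n) = (Nat.factorial n : ℂ) • Ωn n := by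
    rwa [Nat.cast_smul_eq_nsmul, Nat.cast_smul_eq_nsmul]
  exact smul_right_injective (EA n) (Nat.cast_ne_zero.mpr (Nat.factorial_ne_zero n)) h2

end
end

section
/- For every real C² function u on ℝ^{4n}, the 2n×2n complex matrix identity τ(H_u)·J = 2·(Δ_{AB}u)_{A,B=0,…,2n−1} holds pointwise, where H_u is the quaternionic Hessian of u. In particular H_u = a + b·j with complex matrix blocks a = 2(Δ_{l,n+k}u)_{l,k} and b = 2(Δ_{l,k}u)_{l,k}. -/
open scoped Quaternion
open Matrix Sum

noncomputable section

private lemma pdR_contDiff {n : ℕ} {u : V4 n → ℝ} (hu : ContDiff ℝ 2 u) (b : Fin (4 * n)) :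
    ContDiff ℝ 1 (pdR b u) := by
  have h : ContDiff ℝ 1 (fderiv ℝ u) := hu.fderiv_right (by norm_num)
  exact h.clm_apply contDiff_const

private lemma schwarz {n : ℕ} {u : V4 n → ℝ} (hu : ContDiff ℝ 2 u) (a b : Fin (4 * n))
    (q : V4 n) : pdR a (pdR b u) q = pdR b (pdR a u) q := by
  have hdu : ContDiff ℝ 1 (fderiv ℝ u) := hu.fderiv_right (by norm_num)
  have h1 : ∀ y, HasFDerivAt u (fderiv ℝ u y) y := fun y =>
    (hu.differentiable (by norm_num) y).hasFDerivAt
  have h2 : HasFDerivAt (fderiv ℝ u) (fderiv ℝ (fderiv ℝ u) q) q :=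
    (hdu.differentiable one_ne_zero q).hasFDerivAt
  have key := second_derivative_symmetric h1 h2 (Pi.single b 1) (Pi.single a 1)
  have e : ∀ v w : V4 n, fderiv ℝ (fun y => fderiv ℝ u y w) q v
      = fderiv ℝ (fderiv ℝ u) q v w := by
    intro v w
    rw [fderiv_clm_apply (hdu.differentiable one_ne_zero q) (differentiableAt_const w)]
    simp
  unfold pdR
  rw [e, e, key]

private lemma pd_ofReal {n : ℕ} {f : V4 n → ℝ} {x : V4 n} (hf : DifferentiableAt ℝ f x)
    (a : Fin (4 * n)) : pd a (fun y => ((f y : ℝ) : ℂ)) x = (pdR a f x : ℂ) := by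
  have h : HasFDerivAt (fun y => ((f y : ℝ) : ℂ)) (Complex.ofRealCLM.comp (fderiv ℝ f x)) x :=
    Complex.ofRealCLM.hasFDerivAt.comp x hf.hasFDerivAt
  unfold pd pdR
  rw [h.fderiv]
  simp

private lemma pd_comb {n : ℕ} {g₀ g₁ : V4 n → ℝ} {x : V4 n}
    (h₀ : DifferentiableAt ℝ g₀ x) (h₁ : DifferentiableAt ℝ g₁ x) (c₀ c₁ : ℂ)
    (a : Fin (4 * n)) :
    pd a (fun y => c₀ * (g₀ y : ℂ) + c₁ * (g₁ y : ℂ)) x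
      = c₀ * (pdR a g₀ x : ℂ) + c₁ * (pdR a g₁ x : ℂ) := by
  have H₀ : HasFDerivAt (fun y => ((g₀ y : ℝ) : ℂ)) (Complex.ofRealCLM.comp (fderiv ℝ g₀ x)) x :=
    Complex.ofRealCLM.hasFDerivAt.comp x h₀.hasFDerivAt
  have H₁ : HasFDerivAt (fun y => ((g₁ y : ℝ) : ℂ)) (Complex.ofRealCLM.comp (fderiv ℝ g₁ x)) x :=
    Complex.ofRealCLM.hasFDerivAt.comp x h₁.hasFDerivAt
  have H : HasFDerivAt (fun y => c₀ * (g₀ y : ℂ) + c₁ * (g₁ y : ℂ))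
      (c₀ • (Complex.ofRealCLM.comp (fderiv ℝ g₀ x)) + c₁ • (Complex.ofRealCLM.comp (fderiv ℝ g₁ x))) x :=
    (H₀.const_mul c₀).add (H₁.const_mul c₁)
  unfold pd pdR
  rw [H.fderiv]
  simp [smul_eq_mul]

private def cf {n : ℕ} (A : Idx n) (α : Fin 2) : Fin 2 → ℂ :=
  match A, α with
  | Sum.inl _, 0 => ![1, Complex.I]
  | Sum.inl _, 1 => ![-1, -Complex.I]
  | Sum.inr _, 0 => ![1, -Complex.I]
  | Sum.inr _, 1 => ![1, -Complex.I]

private def ix {n : ℕ} (A : Idx n) (α : Fin 2) : Fin 2 → Fin (4 * n) :=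
  match A, α with
  | Sum.inl l, 0 => ![X l 0, X l 1]
  | Sum.inl l, 1 => ![X l 2, X l 3]
  | Sum.inr l, 0 => ![X l 2, X l 3]
  | Sum.inr l, 1 => ![X l 0, X l 1]

private lemma nabla_eq {n : ℕ} (A : Idx n) (α : Fin 2) (f : V4 n → ℂ) (x : V4 n) :
    nabla A α f x = cf A α 0 * pd (ix A α 0) f x + cf A α 1 * pd (ix A α 1) f x := by
  rcases A with l | l <;> fin_cases α <;>
    simp [nabla, cf, ix] <;> ring

private lemma nabla_comb {n : ℕ} {u : V4 n → ℝ} (hu : ContDiff ℝ 2 u)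
    (A B : Idx n) (α β : Fin 2) (q : V4 n) :
    nabla A α (nabla B β (fun x => ((u x : ℝ) : ℂ))) q
      = cf A α 0 * (cf B β 0 * (pdR (ix A α 0) (pdR (ix B β 0) u) q : ℂ)
          + cf B β 1 * (pdR (ix A α 0) (pdR (ix B β 1) u) q : ℂ))
        + cf A α 1 * (cf B β 0 * (pdR (ix A α 1) (pdR (ix B β 0) u) q : ℂ)
          + cf B β 1 * (pdR (ix A α 1) (pdR (ix B β 1) u) q : ℂ)) := by
  have hd : Differentiable ℝ u := hu.differentiable (by norm_num)
  have hinner : nabla B β (fun x => ((u x : ℝ) : ℂ))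
      = fun x => cf B β 0 * (pdR (ix B β 0) u x : ℂ) + cf B β 1 * (pdR (ix B β 1) u x : ℂ) := by
    funext x
    rw [nabla_eq, pd_ofReal (hd x), pd_ofReal (hd x)]
  have hg : ∀ b : Fin (4 * n), DifferentiableAt ℝ (pdR b u) q := fun b =>
    ((pdR_contDiff hu b).differentiable one_ne_zero) q
  rw [nabla_eq, hinner, pd_comb (hg _) (hg _), pd_comb (hg _) (hg _)]

private lemma pdH_dq {n : ℕ} {u : V4 n → ℝ} (hu : ContDiff ℝ 2 u) (a : Fin (4 * n))
    (k : Fin n) (q : V4 n) :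
    pdH a (dq k u) q =
      ⟨pdR a (pdR (X k 0) u) q, -pdR a (pdR (X k 1) u) q,
       -pdR a (pdR (X k 2) u) q, -pdR a (pdR (X k 3) u) q⟩ := by
  have hD : ∀ b : Fin (4 * n), HasFDerivAt (pdR b u) (fderiv ℝ (pdR b u) q) q := fun b =>
    (((pdR_contDiff hu b).differentiable one_ne_zero) q).hasFDerivAt
  have hfun : dq k u = fun x => pdR (X k 0) u x • (1 : ℍ[ℝ]) + pdR (X k 1) u x • (-iH)
      + pdR (X k 2) u x • (-jH) + pdR (X k 3) u x • (-kH) := by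
    funext x
    ext <;> simp [dq] <;> simp [iH, jH, kH]
  have H : HasFDerivAt (dq k u)
      ((fderiv ℝ (pdR (X k 0) u) q).smulRight (1 : ℍ[ℝ])
        + (fderiv ℝ (pdR (X k 1) u) q).smulRight (-iH)
        + (fderiv ℝ (pdR (X k 2) u) q).smulRight (-jH)
        + (fderiv ℝ (pdR (X k 3) u) q).smulRight (-kH)) q := by
    rw [hfun]
    exact ((((hD _).smul_const _).add ((hD _).smul_const _)).add ((hD _).smul_const _)).add
      ((hD _).smul_const _)
  unfold pdH
  rw [H.fderiv]
  ext <;> simp [pdR] <;> simp [iH, jH, kH]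

private lemma hess_entry {n : ℕ} {u : V4 n → ℝ} (hu : ContDiff ℝ 2 u) (q : V4 n)
    (l k : Fin n) :
    Hess u q l k =
      ⟨pdR (X l 0) (pdR (X k 0) u) q + pdR (X l 1) (pdR (X k 1) u) q
          + pdR (X l 2) (pdR (X k 2) u) q + pdR (X l 3) (pdR (X k 3) u) q,
        pdR (X l 1) (pdR (X k 0) u) q - pdR (X l 0) (pdR (X k 1) u) q
          + pdR (X l 3) (pdR (X k 2) u) q - pdR (X l 2) (pdR (X k 3) u) q,
        pdR (X l 2) (pdR (X k 0) u) q - pdR (X l 0) (pdR (X k 2) u) q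
          + pdR (X l 1) (pdR (X k 3) u) q - pdR (X l 3) (pdR (X k 1) u) q,
        pdR (X l 3) (pdR (X k 0) u) q - pdR (X l 0) (pdR (X k 3) u) q
          + pdR (X l 2) (pdR (X k 1) u) q - pdR (X l 1) (pdR (X k 2) u) q⟩ := by
  show dqbar l (dq k u) q = _
  unfold dqbar
  ext <;> simp only [Quaternion.re_add, Quaternion.imI_add, Quaternion.imJ_add, Quaternion.imK_add,
      Quaternion.re_mul, Quaternion.imI_mul, Quaternion.imJ_mul, Quaternion.imK_mul] <;>
    simp [pdH_dq hu, iH, jH, kH] <;> ring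

private lemma core {n : ℕ} {u : V4 n → ℝ} (hu : ContDiff ℝ 2 u) (q : V4 n) (l k : Fin n) :
    qb (Hess u q l k) = 2 * Delta (inl l) (inl k) u q
    ∧ qa (Hess u q l k) = 2 * Delta (inl l) (inr k) u q
    ∧ -((starRingEnd ℂ) (qa (Hess u q l k))) = 2 * Delta (inr l) (inl k) u q
    ∧ (starRingEnd ℂ) (qb (Hess u q l k)) = 2 * Delta (inr l) (inr k) u q := by
  have sw : ∀ a b : Fin 4, pdR (X k a) (pdR (X l b) u) q = pdR (X l b) (pdR (X k a) u) q :=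
    fun a b => schwarz hu _ _ q
  rw [hess_entry hu]
  unfold Delta
  refine ⟨?_, ?_, ?_, ?_⟩ <;>
    rw [nabla_comb hu, nabla_comb hu] <;>
    simp [cf, ix, qa, qb, Complex.ext_iff] <;>
    constructor <;>
    linarith [sw 0 0, sw 0 1, sw 0 2, sw 0 3, sw 1 0, sw 1 1, sw 1 2, sw 1 3,
      sw 2 0, sw 2 1, sw 2 2, sw 2 3, sw 3 0, sw 3 1, sw 3 2, sw 3 3]

/-- τ(H_u)·J = 2·(Δ_{AB}u), and the blocks of H_u = a + b·j are
a = 2(Δ_{l,n+k}u) and b = 2(Δ_{l,k}u). -/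
theorem stmt_10 {n : ℕ} (u : V4 n → ℝ) (hu : ContDiff ℝ 2 u) (q : V4 n) :
    tau (Hess u q) * Jmat n = (2 : ℂ) • Matrix.of (fun A B : Idx n => Delta A B u q) ∧
      (Hess u q).map qa = Matrix.of (fun l k : Fin n => 2 * Delta (inl l) (inr k) u q) ∧
      (Hess u q).map qb = Matrix.of (fun l k : Fin n => 2 * Delta (inl l) (inl k) u q) := by
  have hc := fun l k => core hu q l k
  refine ⟨?_, ?_, ?_⟩
  · unfold tau Jmat
    rw [Matrix.fromBlocks_multiply]
    ext A B
    rcases A with a | a <;> rcases B with b | b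
    · simpa [conjM, Matrix.map_apply, smul_eq_mul] using (hc a b).1
    · simpa [conjM, Matrix.map_apply, smul_eq_mul] using (hc a b).2.1
    · simpa [conjM, Matrix.map_apply, smul_eq_mul] using (hc a b).2.2.1
    · simpa [conjM, Matrix.map_apply, smul_eq_mul] using (hc a b).2.2.2
  · ext l k
    simpa [Matrix.map_apply] using (hc l k).2.1
  · ext l k
    simpa [Matrix.map_apply] using (hc l k).1

end
end
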